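/- arXiv:1311.5643 — 2 statements merged into one kernel-verified Lean document; each statement's English description precedes it below -/
import Mathlib

section
/- If h ≥ 2, the i-th ordered configuration space F_h^i(k,n) is nonempty if and only if k+1 ≤ i ≤ min(kh, n). -/
open Topology Matrix Module

/-- The complex Stiefel manifold `V(k,n)`: ordered `k`-tuples of orthonormal vectors in
`ℂ^n`, realized as `k × n` complex matrices with orthonormal rows. -/
def Stiefel (k n : ℕ) : Type :=
  {A : Matrix (Fin k) (Fin n) ℂ // A * Aᴴ = 1}

noncomputable instance (k n : ℕ) : TopologicalSpace (Stiefel k n) :=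
  instTopologicalSpaceSubtype

/-- The complex Grassmannian `Gr(k,n)` of `k`-dimensional subspaces of `ℂ^n`, realized as
hermitian idempotent `n × n` complex matrices (orthogonal projectors) of rank `k`. -/
def Grass (k n : ℕ) : Type :=
  {P : Matrix (Fin n) (Fin n) ℂ // P * P = P ∧ Pᴴ = P ∧ P.rank = k}

noncomputable instance (k n : ℕ) : TopologicalSpace (Grass k n) :=
  instTopologicalSpaceSubtype

/-- The `k`-dimensional subspace of `ℂ^n` corresponding to a point of `Gr(k,n)`:
the range of the associated projector. -/
noncomputable def Grass.sp {k n : ℕ} (P : Grass k n) : Submodule ℂ (Fin n → ℂ) :=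
  LinearMap.range P.1.mulVecLin

/-- The ordered configuration space `F_h^i(k,n)` of `h` pairwise distinct points of
`Gr(k,n)` whose sum is a subspace of dimension `i`. -/
def Config (h i k n : ℕ) : Type :=
  {H : Fin h → Grass k n // Function.Injective H ∧
    finrank ℂ ↥(⨆ j, (H j).sp : Submodule ℂ (Fin n → ℂ)) = i}

noncomputable instance (h i k n : ℕ) : TopologicalSpace (Config h i k n) :=
  instTopologicalSpaceSubtype

/-- `p : E → B` is a locally trivial fibration with fiber `F`: every point of the base has
an open neighborhood `U` over which `p` is trivial, i.e. there is a homeomorphism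
`p⁻¹(U) ≃ₜ U × F` over `U`. -/
def IsLocTrivFibration {E B : Type*} (F : Type*) [TopologicalSpace E] [TopologicalSpace B]
    [TopologicalSpace F] (p : E → B) : Prop :=
  ∀ b : B, ∃ U : Set B, IsOpen U ∧ b ∈ U ∧
    ∃ e : {x : E // p x ∈ U} ≃ₜ U × F, ∀ x, ((e x).1 : B) = p x.1

/-! ### Auxiliary lemmas -/

section Aux

lemma aux_mulVecLin_inj {n : ℕ} :
    Function.Injective (Matrix.mulVecLin (R := ℂ) (m := Fin n) (n := Fin n)) := by
  intro A B h
  ext x j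
  have := congrFun (congrArg (fun f => f.toFun (Pi.single j 1)) h) x
  simpa [Matrix.mulVecLin_apply, Matrix.mulVec_single] using this

lemma aux_absorb {n : ℕ} {P Q : Matrix (Fin n) (Fin n) ℂ} (hQ : Q * Q = Q)
    (hle : LinearMap.range P.mulVecLin ≤ LinearMap.range Q.mulVecLin) : Q * P = P := by
  apply aux_mulVecLin_inj
  refine LinearMap.ext fun v => ?_
  simp only [Matrix.mulVecLin_apply]
  rw [← Matrix.mulVec_mulVec]
  obtain ⟨w, hw⟩ := hle ⟨v, rfl⟩
  simp only [Matrix.mulVecLin_apply] at hw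
  rw [← hw, Matrix.mulVec_mulVec, hQ]

lemma Grass.sp_injective {k n : ℕ} : Function.Injective (Grass.sp (k := k) (n := n)) := by
  intro Pp Qq hPQ
  simp only [Grass.sp] at hPQ
  obtain ⟨hP1, hP2, -⟩ := Pp.2
  obtain ⟨hQ1, hQ2, -⟩ := Qq.2
  set P := Pp.1
  set Q := Qq.1
  apply Subtype.ext
  have h1 : Q * P = P := aux_absorb hQ1 (le_of_eq hPQ)
  have h2 : P * Q = Q := aux_absorb hP1 (le_of_eq hPQ.symm)
  show P = Q
  calc P = Pᴴ := hP2.symm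
    _ = (Q * P)ᴴ := by rw [h1]
    _ = Pᴴ * Qᴴ := by rw [Matrix.conjTranspose_mul]
    _ = P * Q := by rw [hP2, hQ2]
    _ = Q := h2

lemma Grass.finrank_sp {k n : ℕ} (P : Grass k n) : finrank ℂ P.sp = k :=
  P.2.2.2

/-! ### The projector onto a subspace -/

noncomputable def projOf {n : ℕ} (U : Submodule ℂ (EuclideanSpace ℂ (Fin n))) :
    Matrix (Fin n) (Fin n) ℂ :=
  Matrix.toEuclideanLin.symm (U.subtype ∘ₗ (U.orthogonalProjectionOnto).toLinearMap)

lemma projOf_mulVec {n : ℕ} (U : Submodule ℂ (EuclideanSpace ℂ (Fin n)))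
    (v : EuclideanSpace ℂ (Fin n)) :
    (projOf U) *ᵥ v.ofLp = (U.orthogonalProjectionOnto v : EuclideanSpace ℂ (Fin n)).ofLp := by
  have h := Matrix.toEuclideanLin.apply_symm_apply
    (U.subtype ∘ₗ (U.orthogonalProjectionOnto).toLinearMap)
  exact congrArg WithLp.ofLp (LinearMap.congr_fun h v)

lemma projOf_idem {n : ℕ} (U : Submodule ℂ (EuclideanSpace ℂ (Fin n))) :
    projOf U * projOf U = projOf U := by
  ext x j
  have h : (projOf U * projOf U) *ᵥ (WithLp.toLp 2 (Pi.single j 1 : Fin n → ℂ)).ofLp =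
      projOf U *ᵥ (WithLp.toLp 2 (Pi.single j 1 : Fin n → ℂ)).ofLp := by
    rw [← Matrix.mulVec_mulVec, projOf_mulVec, projOf_mulVec, WithLp.toLp_ofLp]
    exact congrArg (fun w : U => (w : EuclideanSpace ℂ (Fin n)).ofLp)
      (U.orthogonalProjectionOnto_mem_subspace_eq_self _)
  have := congrFun h x
  simpa [Matrix.mulVec_single] using this

lemma projOf_herm {n : ℕ} (U : Submodule ℂ (EuclideanSpace ℂ (Fin n))) :
    (projOf U)ᴴ = projOf U := by
  rw [show (projOf U)ᴴ = projOf U ↔ (projOf U).IsHermitian from Iff.rfl,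
    ← Matrix.isSymmetric_toEuclideanLin_iff]
  intro x y
  have hx : Matrix.toEuclideanLin (projOf U) =
      (U.subtype ∘ₗ (U.orthogonalProjectionOnto).toLinearMap) :=
    Matrix.toEuclideanLin.apply_symm_apply _
  rw [hx]
  exact U.inner_starProjection_left_eq_right x y

noncomputable def euclEquiv (n : ℕ) : EuclideanSpace ℂ (Fin n) ≃ₗ[ℂ] (Fin n → ℂ) :=
  WithLp.linearEquiv 2 ℂ (Fin n → ℂ)

lemma projOf_range {n : ℕ} (U : Submodule ℂ (EuclideanSpace ℂ (Fin n))) :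
    LinearMap.range (projOf U).mulVecLin =
      U.map (euclEquiv n).toLinearMap := by
  ext x
  constructor
  · rintro ⟨v, rfl⟩
    exact ⟨U.orthogonalProjectionOnto (WithLp.toLp 2 v), SetLike.coe_mem _,
      (projOf_mulVec U (WithLp.toLp 2 v)).symm⟩
  · rintro ⟨y, hy, rfl⟩
    exact ⟨y.ofLp, by
      show (projOf U) *ᵥ y.ofLp = y.ofLp
      rw [projOf_mulVec]
      exact congrArg WithLp.ofLp ((Submodule.starProjection_eq_self_iff (K := U)).2 hy)⟩

lemma aux_map_symm_map {n : ℕ} (U : Submodule ℂ (Fin n → ℂ)) :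
    (U.map (euclEquiv n).symm.toLinearMap).map
      (euclEquiv n).toLinearMap = U :=
  (Submodule.map_symm_eq_iff (euclEquiv n)).mp rfl

noncomputable def grassPt {k n : ℕ} (U : Submodule ℂ (Fin n → ℂ))
    (hU : finrank ℂ U = k) : Grass k n :=
  ⟨projOf (U.map (euclEquiv n).symm.toLinearMap),
    projOf_idem _, projOf_herm _, by
    show finrank ℂ (LinearMap.range (projOf
      (U.map (euclEquiv n).symm.toLinearMap)).mulVecLin) = k
    rw [projOf_range, aux_map_symm_map]; exact hU⟩

lemma grassPt_sp {k n : ℕ} (U : Submodule ℂ (Fin n → ℂ))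
    (hU : finrank ℂ U = k) : (grassPt U hU).sp = U :=
  (projOf_range _).trans (aux_map_symm_map U)

/-! ### Linear independence / span helpers -/

lemma aux_linIndep {ι : Type*} [Fintype ι] [DecidableEq ι] {V : Type*} [AddCommGroup V]
    [Module ℂ V] (g : ι → V) (φ : ι → V →ₗ[ℂ] ℂ)
    (hφ : ∀ a b, φ a (g b) = if b = a then 1 else 0) :
    LinearIndependent ℂ g := by
  rw [Fintype.linearIndependent_iff]
  intro c hc a
  have := congrArg (φ a) hc
  simp only [map_sum, LinearMap.map_smul, hφ, smul_eq_mul, mul_ite, mul_one, mul_zero] at this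
  rw [Finset.sum_ite_eq' Finset.univ a c, if_pos (Finset.mem_univ a)] at this
  simpa using this

lemma aux_span_le_ker {n : ℕ} {ι : Type*} (g : ι → (Fin n → ℂ))
    (φ : (Fin n → ℂ) →ₗ[ℂ] ℂ) (hg : ∀ a, φ (g a) = 0) :
    Submodule.span ℂ (Set.range g) ≤ LinearMap.ker φ := by
  rw [Submodule.span_le]
  rintro _ ⟨a, rfl⟩
  exact hg a

lemma aux_notmem {n : ℕ} {ι : Type*} (g : ι → (Fin n → ℂ)) (v : Fin n → ℂ)
    (φ : (Fin n → ℂ) →ₗ[ℂ] ℂ) (hg : ∀ a, φ (g a) = 0) (hv : φ v ≠ 0) :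
    v ∉ Submodule.span ℂ (Set.range g) := fun hmem =>
  hv (aux_span_le_ker g φ hg hmem)

end Aux

/-- For `h ≥ 2` and `0 < k < n`, the ordered configuration space `F_h^i(k,n)` is nonempty
if and only if `k + 1 ≤ i ≤ min (k*h) n`. -/
theorem config_nonempty_iff (h i k n : ℕ) (hh : 2 ≤ h) (hk : 0 < k) (hkn : k < n) :
    Nonempty (Config h i k n) ↔ (k + 1 ≤ i ∧ i ≤ min (k * h) n) := by
  constructor
  · rintro ⟨⟨H, hinj, hdim⟩⟩
    have hin : i ≤ n := by
      rw [← hdim]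
      have := Submodule.finrank_le (⨆ j, (H j).sp : Submodule ℂ (Fin n → ℂ))
      rwa [Module.finrank_fin_fun] at this
    have key : ∀ s : Finset (Fin h),
        finrank ℂ ↥(⨆ j ∈ s, (H j).sp : Submodule ℂ (Fin n → ℂ)) ≤ k * s.card := by
      intro s
      induction s using Finset.induction with
      | empty => simp
      | @insert a s ha ih =>
        rw [Finset.iSup_insert, Finset.card_insert_of_notMem ha]
        have h1 : finrank ℂ ↥((H a).sp ⊔ (⨆ j ∈ s, (H j).sp : Submodule ℂ (Fin n → ℂ)))
            ≤ finrank ℂ (H a).sp + finrank ℂ ↥(⨆ j ∈ s, (H j).sp : Submodule ℂ (Fin n → ℂ)) := by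
          rw [← Submodule.finrank_sup_add_finrank_inf_eq]
          exact Nat.le_add_right _ _
        calc finrank ℂ ↥((H a).sp ⊔ (⨆ j ∈ s, (H j).sp : Submodule ℂ (Fin n → ℂ)))
            ≤ finrank ℂ (H a).sp + finrank ℂ ↥(⨆ j ∈ s, (H j).sp : Submodule ℂ (Fin n → ℂ)) := h1
          _ ≤ k + k * s.card := by rw [(H a).finrank_sp]; omega
          _ = k * (s.card + 1) := by ring
    have hikh : i ≤ k * h := by
      rw [← hdim]
      have he : (⨆ j, (H j).sp : Submodule ℂ (Fin n → ℂ))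
          = ⨆ j ∈ Finset.univ, (H j).sp := by simp
      rw [he]
      simpa using key Finset.univ
    have hki : k + 1 ≤ i := by
      have h01 : (⟨0, by omega⟩ : Fin h) ≠ ⟨1, by omega⟩ := by simp
      set s0 := (H ⟨0, by omega⟩).sp with hs0
      set s1 := (H ⟨1, by omega⟩).sp with hs1
      have hne : s0 ≠ s1 := fun e => h01 (hinj (Grass.sp_injective e))
      have hlt : s0 < s0 ⊔ s1 := by
        rcases lt_or_eq_of_le (le_sup_left : s0 ≤ s0 ⊔ s1) with hlt | heq
        · exact hlt
        · exfalso
          apply hne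
          have hle : s1 ≤ s0 := heq ▸ le_sup_right
          exact (Submodule.eq_of_le_of_finrank_le hle
            (by rw [(H _).finrank_sp, (H _).finrank_sp])).symm
      have h2 : finrank ℂ s0 < finrank ℂ ↥(s0 ⊔ s1) :=
        Submodule.finrank_lt_finrank_of_lt hlt
      have h3 : finrank ℂ ↥(s0 ⊔ s1) ≤ i := by
        rw [← hdim]
        refine Submodule.finrank_mono (sup_le ?_ ?_)
        · rw [hs0]; exact le_iSup (fun j => (H j).sp) _
        · rw [hs1]; exact le_iSup (fun j => (H j).sp) _
      rw [(H _).finrank_sp] at h2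
      omega
    exact ⟨hki, le_min hikh hin⟩
  · rintro ⟨hki, hi2⟩
    rw [le_min_iff] at hi2
    obtain ⟨hikh, hin⟩ := hi2
    classical
    set m : ℕ := min h (i - k + 1) with hm
    set t : ℕ → ℕ := fun j => min (j * k) ((i - k) - (m - 1 - j)) with ht
    set E : ℕ → (Fin n → ℂ) := fun a => fun x => if (x : ℕ) = a then 1 else 0 with hE
    have hm1 : 1 ≤ m := by omega
    have hmh : m ≤ h := by omega
    have hmik : m ≤ i - k + 1 := by omega
    have hmk : i ≤ m * k := by
      rcases min_choice h (i - k + 1) with hc | hc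
      · rw [hm, hc, mul_comm]; exact hikh
      · rw [hm, hc]
        have h1 : (i - k) * k ≥ i - k := Nat.le_mul_of_pos_right _ hk
        have h2 : (i - k + 1) * k = (i - k) * k + k := by ring
        omega
    have t0 : t 0 = 0 := by simp [ht]
    have tlast : t (m - 1) = i - k := by
      have h1 : (m - 1) * k = m * k - k := by rw [Nat.sub_one_mul]
      simp only [ht]
      omega
    have tle : ∀ j, j < m → t j ≤ i - k := by
      intro j hj
      simp only [ht]
      omega
    have tgap : ∀ j : ℕ, t (j + 1) ≤ t j + k := by
      intro j
      have e1 : (j + 1) * k = j * k + k := by ring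
      simp only [ht]
      omega
    have tmono : ∀ j : ℕ, j + 1 < m → t j < t (j + 1) := by
      intro j hj
      have e1 : (j + 1) * k = j * k + k := by ring
      simp only [ht]
      omega
    have tmono' : ∀ j' j : ℕ, j < j' → j' < m → t j < t j' := by
      intro j'
      induction j' with
      | zero => omega
      | succ a ih =>
        intro j hj hm'
        rcases Nat.lt_succ_iff_lt_or_eq.mp hj with hlt | rfl
        · exact (ih j hlt (by omega)).trans (tmono a hm')
        · exact tmono j hm'
    have cover : ∀ x : ℕ, x < i → ∃ j, j < m ∧ t j ≤ x ∧ x < t j + k := by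
      intro x hx
      set P : ℕ → Prop := fun j => t j ≤ x with hP
      have hP0 : P 0 := by rw [hP]; simp only [t0]; omega
      set j0 := Nat.findGreatest P (m - 1) with hj0
      have hj0le : j0 ≤ m - 1 := Nat.findGreatest_le _
      have hPj0 : P j0 := Nat.findGreatest_spec (Nat.zero_le _) hP0
      refine ⟨j0, by omega, hPj0, ?_⟩
      by_cases hcase : j0 = m - 1
      · have h1 : t j0 = i - k := by rw [hcase, tlast]
        omega
      · have hlt : j0 + 1 ≤ m - 1 := by omega
        have hnot : ¬ P (j0 + 1) := Nat.findGreatest_is_greatest (by omega) hlt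
        have hgap : t (j0 + 1) ≤ t j0 + k := tgap j0
        rw [hP] at hnot
        simp only [not_le] at hnot
        omega
    have hEval : ∀ (b : ℕ) (x : Fin n), E b x = if (x : ℕ) = b then 1 else 0 :=
      fun _ _ => rfl
    -- the generating vectors
    set g : Fin h → Fin k → (Fin n → ℂ) := fun j m' =>
      if (j : ℕ) < m then E (t j + m') else
        if (m' : ℕ) < k - 1 then E m' else E (k - 1) + (((j : ℕ) : ℂ) + 1) • E k
      with hg
    set U : Fin h → Submodule ℂ (Fin n → ℂ) := fun j => Submodule.span ℂ (Set.range (g j))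
      with hU
    have hgmem : ∀ (j : Fin h) (a : Fin k), g j a ∈ U j := fun j a =>
      Submodule.subset_span ⟨a, rfl⟩
    -- linear independence
    have hli : ∀ j : Fin h, LinearIndependent ℂ (g j) := by
      intro j
      by_cases hjm : (j : ℕ) < m
      · refine aux_linIndep (g j)
          (fun a => LinearMap.proj (⟨t j + a, by have := tle j hjm; omega⟩ : Fin n)) ?_
        intro a b
        simp only [hg, if_pos hjm, LinearMap.proj_apply, hEval]
        by_cases hab : b = a
        · subst hab; simp
        · rw [if_neg hab, if_neg]
          intro hcon
          exact hab (Fin.ext (by omega))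
      · refine aux_linIndep (g j)
          (fun a => LinearMap.proj ((⟨min (a : ℕ) (k - 1), by omega⟩) : Fin n)) ?_
        intro a b
        have hak : (a : ℕ) < k := a.isLt
        have hbk : (b : ℕ) < k := b.isLt
        simp only [hg, if_neg hjm, LinearMap.proj_apply]
        by_cases hb : (b : ℕ) < k - 1
        · rw [if_pos hb, hEval]
          by_cases hab : b = a
          · subst hab
            rw [if_pos (show min (b : ℕ) (k - 1) = (b : ℕ) from by omega), if_pos rfl]
          · rw [if_neg hab, if_neg (show ¬ (min (a : ℕ) (k - 1) = (b : ℕ)) from by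
              intro hcon
              exact hab (Fin.ext (by omega)))]
        · rw [if_neg hb]
          simp only [Pi.add_apply, Pi.smul_apply, hEval, smul_eq_mul]
          by_cases hab : b = a
          · subst hab
            rw [if_pos (show min (b : ℕ) (k - 1) = k - 1 from by omega),
              if_neg (show ¬ (min (b : ℕ) (k - 1) = k) from by omega), if_pos rfl]
            ring
          · have ha : (a : ℕ) < k - 1 := by
              rcases Nat.lt_or_ge (a : ℕ) (k - 1) with h' | h'
              · exact h'
              · exact absurd (Fin.ext (by omega) : b = a) hab
            rw [if_neg (show ¬ (min (a : ℕ) (k - 1) = k - 1) from by omega),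
              if_neg (show ¬ (min (a : ℕ) (k - 1) = k) from by omega), if_neg hab]
            ring
    have hfr : ∀ j : Fin h, finrank ℂ (U j) = k := by
      intro j
      rw [hU]
      rw [finrank_span_eq_card (hli j)]
      simp
    -- injectivity of U
    have hA : ∀ j j' : Fin h, (j : ℕ) < m → (j' : ℕ) < m → t j < t j' → U j ≠ U j' := by
      intro j j' hjm hj'm htlt hEq
      have hb : t (j' : ℕ) + (k - 1) < n := by have := tle j' hj'm; omega
      have hker : ∀ a : Fin k,
          (LinearMap.proj (⟨t (j' : ℕ) + (k - 1), hb⟩ : Fin n) :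
            (Fin n → ℂ) →ₗ[ℂ] ℂ) (g j a) = 0 := by
        intro a
        have hak : (a : ℕ) < k := a.isLt
        simp only [hg, if_pos hjm, LinearMap.proj_apply, hEval]
        rw [if_neg (by omega)]
      have hv : g j' ⟨k - 1, by omega⟩ ∈ U j := by rw [hEq]; exact hgmem j' _
      refine aux_notmem (g j) _ _ hker ?_ hv
      simp only [hg, if_pos hj'm, LinearMap.proj_apply, hEval]
      rw [if_pos (by simp)]
      exact one_ne_zero
    have hB : ∀ j j' : Fin h, (j : ℕ) < m → ¬ ((j' : ℕ) < m) → U j ≠ U j' := by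
      intro j j' hjm hj'm hEq
      -- step 1 : t j = 0
      have htj : t (j : ℕ) = 0 := by
        by_contra htj
        have hker : ∀ a : Fin k,
            (LinearMap.proj (⟨0, by omega⟩ : Fin n) : (Fin n → ℂ) →ₗ[ℂ] ℂ) (g j a) = 0 := by
          intro a
          simp only [hg, if_pos hjm, LinearMap.proj_apply, hEval]
          rw [if_neg (by omega)]
        have hv : g j' ⟨0, hk⟩ ∈ U j := by rw [hEq]; exact hgmem j' _
        refine aux_notmem (g j) _ _ hker ?_ hv
        simp only [hg, if_neg hj'm, LinearMap.proj_apply]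
        by_cases h0 : ((⟨0, hk⟩ : Fin k) : ℕ) < k - 1
        · rw [if_pos h0, hEval]
          rw [if_pos (show (0 : ℕ) = 0 from rfl)]
          exact one_ne_zero
        · rw [if_neg h0]
          have h0' : k = 1 := by
            have : ¬ ((0 : ℕ) < k - 1) := h0
            omega
          simp only [Pi.add_apply, Pi.smul_apply, hEval, smul_eq_mul]
          rw [if_pos (show (0 : ℕ) = k - 1 from by omega),
            if_neg (show ¬ ((0 : ℕ) = k) from by omega)]
          simp
      -- step 2 : coordinate k
      have hker : ∀ a : Fin k,
          (LinearMap.proj (⟨k, by omega⟩ : Fin n) : (Fin n → ℂ) →ₗ[ℂ] ℂ) (g j a) = 0 := by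
        intro a
        have hak : (a : ℕ) < k := a.isLt
        simp only [hg, if_pos hjm, LinearMap.proj_apply, hEval]
        rw [if_neg (by omega)]
      have hv : g j' ⟨k - 1, by omega⟩ ∈ U j := by rw [hEq]; exact hgmem j' _
      refine aux_notmem (g j) _ _ hker ?_ hv
      simp only [hg, if_neg hj'm, LinearMap.proj_apply]
      rw [if_neg (show ¬ ((k - 1 : ℕ) < k - 1) from by omega)]
      simp only [Pi.add_apply, Pi.smul_apply, hEval, smul_eq_mul]
      rw [if_neg (show ¬ ((k : ℕ) = k - 1) from by omega)]
      have hnz : (((j' : ℕ) : ℂ) + 1) ≠ 0 := by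
        have h' : ((((j' : ℕ) + 1 : ℕ)) : ℂ) ≠ 0 := Nat.cast_ne_zero.mpr (by omega)
        push_cast at h'
        exact h'
      simpa using hnz
    have hC : ∀ j j' : Fin h, ¬ ((j : ℕ) < m) → ¬ ((j' : ℕ) < m) → j ≠ j' → U j ≠ U j' := by
      intro j j' hjm hj'm hne hEq
      set φ : (Fin n → ℂ) →ₗ[ℂ] ℂ :=
        (((j' : ℕ) : ℂ) + 1) • (LinearMap.proj (⟨k - 1, by omega⟩ : Fin n)) -
          LinearMap.proj (⟨k, by omega⟩ : Fin n) with hφdef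
      have hker : ∀ a : Fin k, φ (g j' a) = 0 := by
        intro a
        simp only [hφdef, LinearMap.sub_apply, LinearMap.smul_apply, LinearMap.proj_apply,
          smul_eq_mul, hg, if_neg hj'm]
        by_cases ha : (a : ℕ) < k - 1
        · rw [if_pos ha]
          simp only [hEval]
          rw [if_neg (by omega), if_neg (by omega)]
          ring
        · rw [if_neg ha]
          simp only [Pi.add_apply, Pi.smul_apply, hEval, smul_eq_mul]
          rw [if_neg (show ¬ ((k - 1 : ℕ) = k) from by omega),
            if_neg (show ¬ ((k : ℕ) = k - 1) from by omega)]
          simp only [if_true, ite_true, mul_one, mul_zero, add_zero, zero_add]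
          ring
      have hv : g j ⟨k - 1, by omega⟩ ∈ U j' := by rw [← hEq]; exact hgmem j _
      refine aux_notmem (g j') _ _ hker ?_ hv
      simp only [hφdef, LinearMap.sub_apply, LinearMap.smul_apply, LinearMap.proj_apply,
        smul_eq_mul, hg, if_neg hjm]
      rw [if_neg (show ¬ ((k - 1 : ℕ) < k - 1) from by omega)]
      simp only [Pi.add_apply, Pi.smul_apply, hEval, smul_eq_mul]
      rw [if_neg (show ¬ ((k - 1 : ℕ) = k) from by omega),
        if_neg (show ¬ ((k : ℕ) = k - 1) from by omega)]
      simp only [if_true, ite_true, mul_one, mul_zero, add_zero, zero_add]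
      intro hcon
      apply hne
      have : ((j' : ℕ) : ℂ) + 1 = ((j : ℕ) : ℂ) + 1 := by
        have := sub_eq_zero.mp hcon
        linear_combination this
      have : ((j' : ℕ) : ℂ) = ((j : ℕ) : ℂ) := by linear_combination this
      exact (Fin.ext (Nat.cast_injective this)).symm
    have hUinj : Function.Injective U := by
      intro j j' hEq
      by_contra hne
      by_cases hjm : (j : ℕ) < m <;> by_cases hj'm : (j' : ℕ) < m
      · rcases lt_trichotomy (j : ℕ) (j' : ℕ) with hlt | heq | hgt
        · exact hA j j' hjm hj'm (tmono' _ _ hlt hj'm) hEq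
        · exact hne (Fin.ext heq)
        · exact hA j' j hj'm hjm (tmono' _ _ hgt hjm) hEq.symm
      · exact hB j j' hjm hj'm hEq
      · exact hB j' j hj'm hjm hEq.symm
      · exact hC j j' hjm hj'm hne hEq
    -- assemble the configuration
    set H : Fin h → Grass k n := fun j => grassPt (U j) (hfr j) with hH
    have hsp : ∀ j, (H j).sp = U j := fun j => grassPt_sp (U j) (hfr j)
    have hHinj : Function.Injective H := by
      intro j j' hEq
      apply hUinj
      rw [← hsp j, ← hsp j', hEq]
    -- total span
    set B : Submodule ℂ (Fin n → ℂ) :=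
      Submodule.span ℂ (Set.range (fun x : Fin i => E (x : ℕ))) with hBdef
    have hfrB : finrank ℂ B = i := by
      rw [hBdef, finrank_span_eq_card (aux_linIndep _
        (fun x : Fin i => LinearMap.proj (⟨(x : ℕ), by omega⟩ : Fin n)) ?_)]
      · simp
      · intro a b
        simp only [LinearMap.proj_apply, hEval]
        by_cases hab : b = a
        · subst hab; simp
        · rw [if_neg hab, if_neg (by intro hcon; exact hab (Fin.ext (by omega)))]
    have hTB : (⨆ j, U j) = B := by
      apply le_antisymm
      · refine iSup_le fun j => ?_
        rw [hU, Submodule.span_le]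
        rintro _ ⟨a, rfl⟩
        have hak : (a : ℕ) < k := a.isLt
        simp only [hg]
        by_cases hjm : (j : ℕ) < m
        · rw [if_pos hjm]
          have hb : t (j : ℕ) + (a : ℕ) < i := by have := tle j hjm; omega
          exact Submodule.subset_span ⟨⟨t (j : ℕ) + (a : ℕ), hb⟩, rfl⟩
        · rw [if_neg hjm]
          by_cases ha : (a : ℕ) < k - 1
          · rw [if_pos ha]
            exact Submodule.subset_span ⟨⟨(a : ℕ), by omega⟩, rfl⟩
          · rw [if_neg ha]
            exact Submodule.add_mem _
              (Submodule.subset_span ⟨⟨k - 1, by omega⟩, rfl⟩)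
              (Submodule.smul_mem _ _ (Submodule.subset_span ⟨⟨k, by omega⟩, rfl⟩))
      · rw [hBdef, Submodule.span_le]
        rintro _ ⟨x, rfl⟩
        obtain ⟨j0, hj0m, hj0le, hj0lt⟩ := cover (x : ℕ) x.isLt
        have hEeq : E (x : ℕ) = g ⟨j0, by omega⟩ ⟨(x : ℕ) - t j0, by omega⟩ := by
          simp only [hg]
          rw [if_pos (show j0 < m from hj0m)]
          exact congrArg E (show (x : ℕ) = t j0 + ((x : ℕ) - t j0) from by omega)
        show E (x : ℕ) ∈ (⨆ j, U j : Submodule ℂ (Fin n → ℂ))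
        rw [hEeq]
        exact Submodule.mem_iSup_of_mem ⟨j0, by omega⟩ (hgmem _ _)
    have hdim : finrank ℂ ↥(⨆ j, (H j).sp : Submodule ℂ (Fin n → ℂ)) = i := by
      have he : (⨆ j, (H j).sp : Submodule ℂ (Fin n → ℂ)) = B := by
        rw [← hTB]
        exact iSup_congr hsp
      rw [he, hfrB]
    exact ⟨⟨H, hHinj, hdim⟩⟩
end

section
/- The projection onto the first h-1 coordinates pr : F_h^{kh}(k,kh) → F_{h-1}^{k(h-1)}(k,kh) is a locally trivial fibration whose fiber over a point V₀ = (H₁,…,H_{h-1}) is the set {H ∈ Gr(k,kh) : H ⊕ (H₁+⋯+H_{h-1}) = ℂ^{kh}}, which is homeomorphic to ℂ^{k(kh-k)}. -/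
open Topology Matrix Module

namespace PrFib


/-- Matrices are equal if they act equally on vectors. -/
lemma mat_ext {p q : ℕ} {A B : Matrix (Fin p) (Fin q) ℂ} (hAB : ∀ v, A *ᵥ v = B *ᵥ v) :
    A = B := by
  ext i j
  have := congrFun (hAB (Pi.single j 1)) i
  simpa [Matrix.mulVec_single] using this

open ComplexOrder in
lemma gram_det_ne_zero {p q : ℕ} {A : Matrix (Fin p) (Fin q) ℂ}
    (hA : ∀ x, A *ᵥ x = 0 → x = 0) : (Aᴴ * A).det ≠ 0 := by
  intro hdet
  obtain ⟨v, hv, hv0⟩ := (Matrix.exists_mulVec_eq_zero_iff).2 hdet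
  apply hv
  apply hA
  apply dotProduct_star_self_eq_zero.mp
  have : star v ⬝ᵥ ((Aᴴ * A) *ᵥ v) = 0 := by rw [hv0, dotProduct_zero]
  rw [← Matrix.mulVec_mulVec, Matrix.dotProduct_mulVec, ← Matrix.star_mulVec] at this
  simpa using this

/-- hermitian idempotents with the same range are equal -/
lemma proj_ext {p : ℕ} {P Q : Matrix (Fin p) (Fin p) ℂ}
    (hP : P * P = P) (hQ : Q * Q = Q) (hPh : Pᴴ = P) (hQh : Qᴴ = Q)
    (hr : LinearMap.range P.mulVecLin = LinearMap.range Q.mulVecLin) : P = Q := by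
  have key : ∀ (R S : Matrix (Fin p) (Fin p) ℂ), S * S = S →
      LinearMap.range R.mulVecLin ≤ LinearMap.range S.mulVecLin → S * R = R := by
    intro R S hSS hle
    apply mat_ext
    intro v
    obtain ⟨w, hw⟩ := hle ⟨v, rfl⟩
    simp only [Matrix.mulVecLin_apply] at hw
    calc (S * R) *ᵥ v = S *ᵥ (R *ᵥ v) := by rw [Matrix.mulVec_mulVec]
      _ = S *ᵥ (S *ᵥ w) := by rw [hw]
      _ = (S * S) *ᵥ w := by rw [Matrix.mulVec_mulVec]
      _ = R *ᵥ v := by rw [hSS, hw]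
  have h1 : Q * P = P := key P Q hQ hr.le
  have h2 : P * Q = Q := key Q P hP hr.ge
  calc P = (Q * P)ᴴ := by rw [h1, hPh]
    _ = Pᴴ * Qᴴ := by rw [Matrix.conjTranspose_mul]
    _ = Q := by rw [hPh, hQh, h2]

/-- kernel of 1 - P is range of P for idempotent P -/
lemma ker_one_sub {p : ℕ} {P : Matrix (Fin p) (Fin p) ℂ} (hP : P * P = P) {v : Fin p → ℂ} :
    (1 - P) *ᵥ v = 0 ↔ v ∈ LinearMap.range P.mulVecLin := by
  constructor
  · intro hv
    simp only [Matrix.sub_mulVec, Matrix.one_mulVec] at hv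
    exact ⟨v, (sub_eq_zero.mp hv).symm⟩
  · rintro ⟨w, rfl⟩
    simp only [Matrix.mulVecLin_apply, Matrix.mulVec_mulVec, Matrix.sub_mul, Matrix.one_mul,
      hP, sub_self, Matrix.zero_mulVec]

/-- range of product is contained in range of left factor -/
lemma range_mul_le {p q r : ℕ} (A : Matrix (Fin p) (Fin q) ℂ) (B : Matrix (Fin q) (Fin r) ℂ) :
    LinearMap.range (A * B).mulVecLin ≤ LinearMap.range A.mulVecLin := by
  rw [Matrix.mulVecLin_mul]
  exact LinearMap.range_comp_le_range _ _

/-- continuity of matrix inverse along a map with nonvanishing determinant -/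
lemma continuous_matrix_inv {X : Type*} [TopologicalSpace X] {p : ℕ}
    {f : X → Matrix (Fin p) (Fin p) ℂ} (hf : Continuous f) (h : ∀ x, (f x).det ≠ 0) :
    Continuous fun x => (f x)⁻¹ := by
  simp_rw [Matrix.inv_def, Ring.inverse_eq_inv]
  exact ((hf.matrix_det.inv₀ h).smul hf.matrix_adjugate)

/-- a matrix whose columns are a basis of a given submodule -/
lemma exists_basis_matrix (n m : ℕ) (U : Submodule ℂ (Fin n → ℂ)) (hU : finrank ℂ U = m) :
    ∃ E : Matrix (Fin n) (Fin m) ℂ, (∀ x, E *ᵥ x = 0 → x = 0) ∧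
      LinearMap.range E.mulVecLin = U := by
  let b : Basis (Fin m) ℂ U := finBasisOfFinrankEq ℂ U hU
  set E : Matrix (Fin n) (Fin m) ℂ := Matrix.of fun i j => (b j : Fin n → ℂ) i with hE
  have hEx : ∀ x, E *ᵥ x = ((∑ j, x j • b j : U) : Fin n → ℂ) := by
    intro x
    funext i
    simp only [Matrix.mulVec, dotProduct, hE, Matrix.of_apply]
    rw [Submodule.coe_sum]
    rw [Finset.sum_apply]
    simp [Submodule.coe_smul, mul_comm]
  refine ⟨E, ?_, ?_⟩
  · intro x hx
    rw [hEx] at hx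
    have h0 : (∑ j, x j • b j : U) = 0 := by
      apply Subtype.ext
      simpa using hx
    have := Fintype.linearIndependent_iff.mp b.linearIndependent x h0
    funext j; exact this j
  · apply le_antisymm
    · rintro y ⟨x, rfl⟩
      simp only [Matrix.mulVecLin_apply, hEx]
      exact Submodule.coe_mem _
    · intro u hu
      refine ⟨fun j => b.repr ⟨u, hu⟩ j, ?_⟩
      simp only [Matrix.mulVecLin_apply, hEx]
      rw [b.sum_repr ⟨u, hu⟩]

section Chart

variable {n m k : ℕ}

noncomputable def phi (B : Matrix (Fin n) (Fin k) ℂ) (E : Matrix (Fin n) (Fin m) ℂ)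
    (X : Matrix (Fin m) (Fin k) ℂ) : Matrix (Fin n) (Fin n) ℂ :=
  (B + E * X) * ((B + E * X)ᴴ * (B + E * X))⁻¹ * (B + E * X)ᴴ

noncomputable def psi (B : Matrix (Fin n) (Fin k) ℂ) (E : Matrix (Fin n) (Fin m) ℂ)
    (P : Matrix (Fin n) (Fin n) ℂ) : Matrix (Fin m) (Fin k) ℂ :=
  -((((1 - P) * E)ᴴ * ((1 - P) * E))⁻¹ * ((1 - P) * E)ᴴ * ((1 - P) * B))

variable {B : Matrix (Fin n) (Fin k) ℂ} {E : Matrix (Fin n) (Fin m) ℂ}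

/-- the transversality hypothesis: columns of `B` and `E` are jointly independent -/
def TransHyp (B : Matrix (Fin n) (Fin k) ℂ) (E : Matrix (Fin n) (Fin m) ℂ) : Prop :=
  ∀ v x, B *ᵥ v + E *ᵥ x = 0 → v = 0 ∧ x = 0

lemma M_inj (hBE : TransHyp B E) (X : Matrix (Fin m) (Fin k) ℂ) :
    ∀ v, (B + E * X) *ᵥ v = 0 → v = 0 := by
  intro v hv
  have : B *ᵥ v + E *ᵥ (X *ᵥ v) = 0 := by
    rwa [Matrix.mulVec_mulVec, ← Matrix.add_mulVec]
  exact (hBE _ _ this).1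

lemma G_det (hBE : TransHyp B E) (X : Matrix (Fin m) (Fin k) ℂ) :
    ((B + E * X)ᴴ * (B + E * X)).det ≠ 0 :=
  gram_det_ne_zero (M_inj hBE X)

lemma phi_mul_M (hBE : TransHyp B E) (X : Matrix (Fin m) (Fin k) ℂ) :
    phi B E X * (B + E * X) = B + E * X := by
  have hG : IsUnit ((B + E * X)ᴴ * (B + E * X)).det := isUnit_iff_ne_zero.mpr (G_det hBE X)
  unfold phi
  rw [Matrix.mul_assoc (B + E * X), Matrix.mul_assoc (B + E * X),
    Matrix.mul_assoc (((B + E * X)ᴴ * (B + E * X))⁻¹), Matrix.nonsing_inv_mul _ hG,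
    Matrix.mul_one]

lemma phi_idem (hBE : TransHyp B E) (X : Matrix (Fin m) (Fin k) ℂ) :
    phi B E X * phi B E X = phi B E X := by
  have h := phi_mul_M hBE X
  calc phi B E X * phi B E X
      = (phi B E X * (B + E * X)) * (((B + E * X)ᴴ * (B + E * X))⁻¹ * (B + E * X)ᴴ) := by
        unfold phi; simp only [Matrix.mul_assoc]
    _ = phi B E X := by rw [h]; unfold phi; simp only [Matrix.mul_assoc]

lemma phi_herm (hBE : TransHyp B E) (X : Matrix (Fin m) (Fin k) ℂ) :
    (phi B E X)ᴴ = phi B E X := by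
  unfold phi
  simp only [Matrix.conjTranspose_mul, Matrix.conjTranspose_conjTranspose,
    Matrix.conjTranspose_nonsing_inv]
  simp only [Matrix.conjTranspose_mul, Matrix.conjTranspose_conjTranspose, Matrix.mul_assoc]

lemma range_phi (hBE : TransHyp B E) (X : Matrix (Fin m) (Fin k) ℂ) :
    LinearMap.range (phi B E X).mulVecLin = LinearMap.range (B + E * X).mulVecLin := by
  apply le_antisymm
  · have : phi B E X = (B + E * X) * (((B + E * X)ᴴ * (B + E * X))⁻¹ * (B + E * X)ᴴ) := by
      unfold phi; simp only [Matrix.mul_assoc]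
    rw [this]
    exact range_mul_le _ _
  · have h : (B + E * X) = phi B E X * (B + E * X) := (phi_mul_M hBE X).symm
    conv_lhs => rw [h]
    exact range_mul_le _ _

lemma range_M_finrank (hBE : TransHyp B E) (X : Matrix (Fin m) (Fin k) ℂ) :
    finrank ℂ (LinearMap.range (B + E * X).mulVecLin) = k := by
  have hinj : Function.Injective (B + E * X).mulVecLin := by
    rw [← LinearMap.ker_eq_bot, LinearMap.ker_eq_bot']
    exact fun v hv => M_inj hBE X v hv
  rw [LinearMap.finrank_range_of_inj hinj, Module.finrank_fin_fun]

lemma phi_rank (hBE : TransHyp B E) (X : Matrix (Fin m) (Fin k) ℂ) :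
    (phi B E X).rank = k := by
  rw [Matrix.rank, range_phi hBE X, range_M_finrank hBE X]

lemma range_M_disjoint (hBE : TransHyp B E) (X : Matrix (Fin m) (Fin k) ℂ) :
    Disjoint (LinearMap.range (B + E * X).mulVecLin) (LinearMap.range E.mulVecLin) := by
  rw [Submodule.disjoint_def]
  rintro y ⟨v, rfl⟩ ⟨x, hx⟩
  simp only [Matrix.mulVecLin_apply] at hx ⊢
  have h1 : (B + E * X) *ᵥ v = B *ᵥ v + E *ᵥ (X *ᵥ v) := by
    rw [Matrix.add_mulVec, Matrix.mulVec_mulVec]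
  have h2 : B *ᵥ v + E *ᵥ (X *ᵥ v - x) = (B + E * X) *ᵥ v - E *ᵥ x := by
    rw [Matrix.mulVec_sub, h1]; abel
  have h3 : B *ᵥ v + E *ᵥ (X *ᵥ v - x) = 0 := by rw [h2, ← hx, sub_self]
  have hv0 := (hBE _ _ h3).1
  rw [hv0, Matrix.mulVec_zero]


lemma isCompl_of_disjoint {p : ℕ} {A U : Submodule ℂ (Fin p → ℂ)} (hd : Disjoint A U)
    (h : finrank ℂ A + finrank ℂ U = p) : IsCompl A U := by
  have hinf : (A ⊓ U : Submodule ℂ (Fin p → ℂ)) = ⊥ := disjoint_iff.mp hd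
  have hkey := Submodule.finrank_sup_add_finrank_inf_eq A U
  rw [hinf, finrank_bot, add_zero] at hkey
  refine ⟨hd, codisjoint_iff.mpr ?_⟩
  apply Submodule.eq_top_of_finrank_eq
  rw [hkey, h, Module.finrank_fin_fun]

lemma isCompl_of_sup_finrank {p : ℕ} {A U : Submodule ℂ (Fin p → ℂ)}
    (hsup : finrank ℂ ((A ⊔ U : Submodule ℂ (Fin p → ℂ)) : Submodule ℂ (Fin p → ℂ)) = p)
    (h : finrank ℂ A + finrank ℂ U = p) : IsCompl A U := by
  have hkey := Submodule.finrank_sup_add_finrank_inf_eq A U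
  have hinf : finrank ℂ (A ⊓ U : Submodule ℂ (Fin p → ℂ)) = 0 := by omega
  refine ⟨disjoint_iff.mpr (Submodule.finrank_eq_zero.mp hinf), codisjoint_iff.mpr ?_⟩
  apply Submodule.eq_top_of_finrank_eq
  rw [hsup, Module.finrank_fin_fun]

lemma phi_isCompl (hBE : TransHyp B E) (X : Matrix (Fin m) (Fin k) ℂ)
    {U : Submodule ℂ (Fin n → ℂ)} (hU : LinearMap.range E.mulVecLin = U)
    (hUdim : finrank ℂ U = m) (hkm : k + m = n) :
    IsCompl (LinearMap.range (phi B E X).mulVecLin) U := by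
  rw [range_phi hBE X]
  apply isCompl_of_disjoint (hU ▸ range_M_disjoint hBE X)
  rw [range_M_finrank hBE X, hUdim, hkm]

lemma F_inj_of_phi (hBE : TransHyp B E) (X : Matrix (Fin m) (Fin k) ℂ) :
    ∀ x, ((1 - phi B E X) * E) *ᵥ x = 0 → x = 0 := by
  intro x hx
  rw [← Matrix.mulVec_mulVec] at hx
  have hmem : E *ᵥ x ∈ LinearMap.range (phi B E X).mulVecLin :=
    (ker_one_sub (phi_idem hBE X)).mp hx
  rw [range_phi hBE X] at hmem
  have h0 : E *ᵥ x = 0 := by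
    have := range_M_disjoint hBE X
    rw [Submodule.disjoint_def] at this
    exact this _ hmem ⟨x, rfl⟩
  have := (hBE 0 x (by rw [Matrix.mulVec_zero, zero_add, h0])).2
  exact this

lemma one_sub_mul_M_phi (hBE : TransHyp B E) (X : Matrix (Fin m) (Fin k) ℂ) :
    (1 - phi B E X) * (B + E * X) = 0 := by
  rw [Matrix.sub_mul, Matrix.one_mul, phi_mul_M hBE X, sub_self]

lemma solution_psi {P : Matrix (Fin n) (Fin n) ℂ} {X : Matrix (Fin m) (Fin k) ℂ}
    (hsol : (1 - P) * (B + E * X) = 0)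
    (hFinj : ∀ x, ((1 - P) * E) *ᵥ x = 0 → x = 0) :
    psi B E P = X := by
  set F := (1 - P) * E with hF
  have hFX : F * X = -((1 - P) * B) := by
    have : (1 - P) * B + F * X = 0 := by
      rw [hF, Matrix.mul_assoc, ← Matrix.mul_add, hsol]
    linear_combination (norm := noncomm_ring) this
  have hdet : (Fᴴ * F).det ≠ 0 := gram_det_ne_zero hFinj
  have hinv : (Fᴴ * F)⁻¹ * (Fᴴ * F) = 1 :=
    Matrix.nonsing_inv_mul _ (isUnit_iff_ne_zero.mpr hdet)
  unfold psi
  rw [← hF]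
  calc -((Fᴴ * F)⁻¹ * Fᴴ * ((1 - P) * B))
      = (Fᴴ * F)⁻¹ * (Fᴴ * -((1 - P) * B)) := by
        rw [Matrix.mul_assoc, Matrix.mul_neg, Matrix.mul_neg]
    _ = (Fᴴ * F)⁻¹ * (Fᴴ * (F * X)) := by rw [← hFX]
    _ = (Fᴴ * F)⁻¹ * (Fᴴ * F) * X := by simp only [Matrix.mul_assoc]
    _ = X := by rw [hinv, Matrix.one_mul]

lemma psi_phi (hBE : TransHyp B E) (X : Matrix (Fin m) (Fin k) ℂ) :
    psi B E (phi B E X) = X :=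
  solution_psi (one_sub_mul_M_phi hBE X) (F_inj_of_phi hBE X)

lemma exists_solution (_hBE : TransHyp B E) {P : Matrix (Fin n) (Fin n) ℂ}
    {U : Submodule ℂ (Fin n → ℂ)} (hU : LinearMap.range E.mulVecLin = U)
    (hcompl : IsCompl (LinearMap.range P.mulVecLin) U) (hP : P * P = P) :
    ∃ X₀ : Matrix (Fin m) (Fin k) ℂ, (1 - P) * (B + E * X₀) = 0 := by
  have hdecomp : ∀ j : Fin k, ∃ (w : Fin n → ℂ) (x : Fin m → ℂ),
      w ∈ LinearMap.range P.mulVecLin ∧ (fun i => B i j) = w + E *ᵥ x := by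
    intro j
    have hmem : (fun i => B i j) ∈ (LinearMap.range P.mulVecLin ⊔ U :
        Submodule ℂ (Fin n → ℂ)) := by
      rw [codisjoint_iff.mp hcompl.codisjoint]; trivial
    obtain ⟨w, hw, u, hu, hwu⟩ := Submodule.mem_sup.mp hmem
    rw [← hU] at hu
    obtain ⟨x, hx⟩ := hu
    exact ⟨w, x, hw, by rw [← hwu, ← hx]; rfl⟩
  choose w x hw hwx using hdecomp
  set M0 : Matrix (Fin m) (Fin k) ℂ := Matrix.of fun r j => -(x j r) with hM0
  refine ⟨M0, ?_⟩
  have hcols : ∀ j, ((1 - P) * (B + E * M0)) *ᵥ (Pi.single j 1 : Fin k → ℂ) = 0 := by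
    intro j
    rw [← Matrix.mulVec_mulVec]
    have hBcol : (B + E * M0) *ᵥ (Pi.single j 1 : Fin k → ℂ) = w j := by
      rw [Matrix.add_mulVec, ← Matrix.mulVec_mulVec]
      have h1 : B *ᵥ (Pi.single j 1 : Fin k → ℂ) = fun i => B i j := by
        rw [Matrix.mulVec_single]; simp; rfl
      have h2 : M0 *ᵥ (Pi.single j 1 : Fin k → ℂ) = -(x j) := by
        rw [Matrix.mulVec_single]; funext r; simp [hM0]
      rw [h1, h2, hwx j]
      funext i
      simp [Matrix.mulVec_neg]
    rw [hBcol]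
    exact (ker_one_sub hP).mpr (hw j)
  apply mat_ext
  intro v
  rw [Matrix.zero_mulVec]
  have hv : v = ∑ j, v j • (Pi.single j 1 : Fin k → ℂ) := by
    funext i
    simp [Finset.sum_apply, Pi.single_apply]
  have hlin : ((1 - P) * (B + E * M0)) *ᵥ v
      = Matrix.mulVecLin ((1 - P) * (B + E * M0)) v := rfl
  rw [hlin, hv, map_sum]
  apply Finset.sum_eq_zero
  intro j _
  rw [_root_.map_smul]
  have h0 : Matrix.mulVecLin ((1 - P) * (B + E * M0)) (Pi.single j 1 : Fin k → ℂ) = 0 :=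
    hcols j
  rw [h0, smul_zero]


lemma F_inj_of_compl (hBE : TransHyp B E) {P : Matrix (Fin n) (Fin n) ℂ}
    {U : Submodule ℂ (Fin n → ℂ)} (hU : LinearMap.range E.mulVecLin = U)
    (hcompl : IsCompl (LinearMap.range P.mulVecLin) U) (hP : P * P = P) :
    ∀ x, ((1 - P) * E) *ᵥ x = 0 → x = 0 := by
  intro x hx
  rw [← Matrix.mulVec_mulVec] at hx
  have hmem : E *ᵥ x ∈ LinearMap.range P.mulVecLin := (ker_one_sub hP).mp hx
  have hmemU : E *ᵥ x ∈ U := hU ▸ ⟨x, rfl⟩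
  have h0 : E *ᵥ x = 0 := by
    have hd := hcompl.disjoint
    rw [Submodule.disjoint_def] at hd
    exact hd _ hmem hmemU
  exact (hBE 0 x (by rw [Matrix.mulVec_zero, zero_add, h0])).2

lemma phi_psi (hBE : TransHyp B E) {P : Matrix (Fin n) (Fin n) ℂ}
    {U : Submodule ℂ (Fin n → ℂ)} (hU : LinearMap.range E.mulVecLin = U)
    (hP : P * P = P) (hPh : Pᴴ = P) (hPrank : P.rank = k)
    (hcompl : IsCompl (LinearMap.range P.mulVecLin) U) :
    phi B E (psi B E P) = P := by
  obtain ⟨X₀, hX₀⟩ := exists_solution hBE hU hcompl hP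
  have hpsi : psi B E P = X₀ := solution_psi hX₀ (F_inj_of_compl hBE hU hcompl hP)
  rw [hpsi]
  have hPM : P * (B + E * X₀) = B + E * X₀ := by
    have h1 : (1 - P) * (B + E * X₀) = 0 := hX₀
    rw [Matrix.sub_mul, Matrix.one_mul, sub_eq_zero] at h1
    exact h1.symm
  have hle : LinearMap.range (B + E * X₀).mulVecLin ≤ LinearMap.range P.mulVecLin := by
    conv_lhs => rw [← hPM]
    exact range_mul_le _ _
  have heq : LinearMap.range (B + E * X₀).mulVecLin = LinearMap.range P.mulVecLin :=
    Submodule.eq_of_le_of_finrank_eq hle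
      (by rw [range_M_finrank hBE X₀]; exact hPrank.symm)
  apply proj_ext (phi_idem hBE X₀) hP (phi_herm hBE X₀) hPh
  rw [range_phi hBE X₀, heq]

lemma continuous_phi {α : Type*} [TopologicalSpace α]
    {Bf : α → Matrix (Fin n) (Fin k) ℂ} {Ef : α → Matrix (Fin n) (Fin m) ℂ}
    {Xf : α → Matrix (Fin m) (Fin k) ℂ}
    (hB : Continuous Bf) (hE : Continuous Ef) (hX : Continuous Xf)
    (h : ∀ z, TransHyp (Bf z) (Ef z)) :
    Continuous fun z => phi (Bf z) (Ef z) (Xf z) := by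
  have hM : Continuous fun z => Bf z + Ef z * Xf z := hB.add (hE.matrix_mul hX)
  have hMH : Continuous fun z => (Bf z + Ef z * Xf z)ᴴ := hM.matrix_conjTranspose
  have hGinv : Continuous fun z => ((Bf z + Ef z * Xf z)ᴴ * (Bf z + Ef z * Xf z))⁻¹ :=
    continuous_matrix_inv (hMH.matrix_mul hM) (fun z => G_det (h z) (Xf z))
  exact (hM.matrix_mul hGinv).matrix_mul hMH

lemma continuous_psi {α : Type*} [TopologicalSpace α]
    {Bf : α → Matrix (Fin n) (Fin k) ℂ} {Ef : α → Matrix (Fin n) (Fin m) ℂ}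
    {Pf : α → Matrix (Fin n) (Fin n) ℂ}
    (hB : Continuous Bf) (hE : Continuous Ef) (hP : Continuous Pf)
    (hdet : ∀ z, (((1 - Pf z) * Ef z)ᴴ * ((1 - Pf z) * Ef z)).det ≠ 0) :
    Continuous fun z => psi (Bf z) (Ef z) (Pf z) := by
  have h1P : Continuous fun z => (1 : Matrix (Fin n) (Fin n) ℂ) - Pf z :=
    continuous_const.sub hP
  have hF : Continuous fun z => (1 - Pf z) * Ef z := h1P.matrix_mul hE
  have hFH : Continuous fun z => ((1 - Pf z) * Ef z)ᴴ := hF.matrix_conjTranspose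
  have hGinv : Continuous fun z => (((1 - Pf z) * Ef z)ᴴ * ((1 - Pf z) * Ef z))⁻¹ :=
    continuous_matrix_inv (hFH.matrix_mul hF) hdet
  exact ((hGinv.matrix_mul hFH).matrix_mul (h1P.matrix_mul hB)).neg

end Chart

end PrFib


section ConfigLayer

open PrFib

variable {h k : ℕ}

lemma sp_finrank {n : ℕ} (W : Grass k n) : finrank ℂ W.sp = k := W.2.2.2

/-- the sum of the subspaces of a configuration -/
noncomputable def sumV {a b n : ℕ} (V : Config a b k n) : Submodule ℂ (Fin n → ℂ) :=
  ⨆ j, (V.1 j).sp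

lemma sumV_finrank {a b n : ℕ} (V : Config a b k n) : finrank ℂ (sumV V) = b := V.2.2

lemma isup_split (hh : 1 ≤ h) {α : Type*} [CompleteLattice α] (f : Fin h → α) :
    (⨆ j, f j) = (⨆ j : Fin (h - 1), f (Fin.castLE (Nat.sub_le h 1) j)) ⊔ f ⟨h - 1, by omega⟩ := by
  apply le_antisymm
  · apply iSup_le
    intro j
    by_cases hj : (j : ℕ) < h - 1
    · have hcast : Fin.castLE (Nat.sub_le h 1) ⟨(j : ℕ), hj⟩ = j := Fin.ext rfl
      have hle := le_iSup (fun j' => f (Fin.castLE (Nat.sub_le h 1) j')) ⟨(j : ℕ), hj⟩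
      rw [hcast] at hle
      exact le_sup_of_le_left hle
    · have hj2 := j.isLt
      have hje : j = ⟨h - 1, by omega⟩ := by
        apply Fin.ext
        show (j : ℕ) = h - 1
        omega
      rw [hje]
      exact le_sup_right
  · exact sup_le (iSup_le fun j => le_iSup f _) (le_iSup f _)

lemma nat_split (hh : 1 ≤ h) : k * h = k * (h - 1) + k := by
  conv_lhs => rw [← Nat.succ_pred_eq_of_pos (by omega : 0 < h)]
  rw [Nat.mul_succ]
  rfl

variable (pr : Config h (k * h) k (k * h) → Config (h - 1) (k * (h - 1)) k (k * h))

lemma sumV_pr (hpr : ∀ (H : Config h (k * h) k (k * h)) (j : Fin (h - 1)),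
      (pr H).1 j = H.1 (Fin.castLE (Nat.sub_le h 1) j)) (hh : 1 ≤ h) (H : Config h (k * h) k (k * h)) :
    sumV (pr H) = ⨆ j : Fin (h - 1), (H.1 (Fin.castLE (Nat.sub_le h 1) j)).sp :=
  iSup_congr fun j => by rw [hpr]

/-- the last subspace of a full configuration is complementary to the rest -/
lemma compl_last (hpr : ∀ (H : Config h (k * h) k (k * h)) (j : Fin (h - 1)),
      (pr H).1 j = H.1 (Fin.castLE (Nat.sub_le h 1) j)) (hh : 1 ≤ h) (H : Config h (k * h) k (k * h)) :
    IsCompl (H.1 ⟨h - 1, by omega⟩).sp (sumV (pr H)) := by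
  have hsplit := isup_split hh (fun j => (H.1 j).sp)
  have hfull : finrank ℂ ((⨆ j : Fin (h - 1), (H.1 (Fin.castLE (Nat.sub_le h 1) j)).sp) ⊔
      (H.1 ⟨h - 1, by omega⟩).sp : Submodule ℂ (Fin (k * h) → ℂ)) = k * h := by
    rw [← hsplit]; exact H.2.2
  rw [sumV_pr pr hpr hh H]
  apply isCompl_of_sup_finrank
  · rw [sup_comm]; exact hfull
  · have h2 : finrank ℂ (⨆ j : Fin (h - 1), (H.1 (Fin.castLE (Nat.sub_le h 1) j)).sp :
        Submodule ℂ (Fin (k * h) → ℂ)) = k * (h - 1) := by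
      rw [← sumV_pr pr hpr hh H]; exact sumV_finrank (pr H)
    rw [sp_finrank, h2, nat_split hh]
    omega


variable {n' : ℕ}

/-- extend a configuration of `h-1` subspaces by one more -/
noncomputable def extFun (V : Config (h - 1) (k * (h - 1)) k (k * h)) (W : Grass k (k * h)) :
    Fin h → Grass k (k * h) :=
  fun j => if hj : (j : ℕ) < h - 1 then V.1 ⟨j, hj⟩ else W

lemma extFun_castLE (V : Config (h - 1) (k * (h - 1)) k (k * h)) (W : Grass k (k * h))
    (j : Fin (h - 1)) : extFun V W (Fin.castLE (Nat.sub_le h 1) j) = V.1 j := by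
  have hj : ((Fin.castLE (Nat.sub_le h 1) j : Fin h) : ℕ) < h - 1 := j.isLt
  rw [extFun, dif_pos hj]
  congr 1

lemma extFun_last (hh : 1 ≤ h) (V : Config (h - 1) (k * (h - 1)) k (k * h))
    (W : Grass k (k * h)) : extFun V W ⟨h - 1, by omega⟩ = W := by
  rw [extFun, dif_neg (lt_irrefl _)]

lemma W_ne (hk : 0 < k) {V : Config (h - 1) (k * (h - 1)) k (k * h)} {W : Grass k (k * h)}
    (hW : IsCompl W.sp (sumV V)) (j : Fin (h - 1)) : V.1 j ≠ W := by
  intro he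
  have hle : W.sp ≤ sumV V := he ▸ le_iSup (fun j' => (V.1 j').sp) j
  have hbot : W.sp ≤ ⊥ := by
    rw [← disjoint_iff.mp hW.disjoint]
    exact le_inf le_rfl hle
  have h0 : finrank ℂ W.sp = 0 := by
    rw [le_bot_iff.mp hbot]
    exact finrank_bot ℂ _
  rw [sp_finrank] at h0
  omega

lemma extFun_isup (hh : 1 ≤ h) {V : Config (h - 1) (k * (h - 1)) k (k * h)}
    {W : Grass k (k * h)} (hW : IsCompl W.sp (sumV V)) :
    (⨆ j, ((extFun V W) j).sp : Submodule ℂ (Fin (k * h) → ℂ)) = ⊤ := by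
  rw [isup_split hh (fun j => ((extFun V W) j).sp)]
  have h1 : (⨆ j : Fin (h - 1), ((extFun V W) (Fin.castLE (Nat.sub_le h 1) j)).sp :
      Submodule ℂ (Fin (k * h) → ℂ)) = sumV V :=
    iSup_congr fun j => by rw [extFun_castLE]
  rw [h1, extFun_last hh, sup_comm]
  exact codisjoint_iff.mp hW.codisjoint

/-- the extended configuration -/
noncomputable def extendC (hh : 1 ≤ h) (hk : 0 < k)
    (V : Config (h - 1) (k * (h - 1)) k (k * h)) (W : Grass k (k * h))
    (hW : IsCompl W.sp (sumV V)) : Config h (k * h) k (k * h) := by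
  refine ⟨extFun V W, ?_, ?_⟩
  · intro a b hab
    by_cases ha : (a : ℕ) < h - 1 <;> by_cases hb : (b : ℕ) < h - 1 <;>
      rw [extFun] at hab <;> rw [extFun] at hab
    · rw [dif_pos ha, dif_pos hb] at hab
      have h3 : ((⟨(a : ℕ), ha⟩ : Fin (h - 1)) : ℕ) = ((⟨(b : ℕ), hb⟩ : Fin (h - 1)) : ℕ) :=
        congrArg Fin.val (V.2.1 hab)
      exact Fin.ext h3
    · rw [dif_pos ha, dif_neg hb] at hab
      exact absurd hab (W_ne hk hW _)
    · rw [dif_neg ha, dif_pos hb] at hab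
      exact absurd hab.symm (W_ne hk hW _)
    · have ha2 := a.isLt
      have hb2 := b.isLt
      apply Fin.ext
      omega
  · rw [extFun_isup hh hW, finrank_top, Module.finrank_fin_fun]

lemma pr_extendC
    (hpr : ∀ (H : Config h (k * h) k (k * h)) (j : Fin (h - 1)),
      (pr H).1 j = H.1 (Fin.castLE (Nat.sub_le h 1) j))
    (hh : 1 ≤ h) (hk : 0 < k) (V : Config (h - 1) (k * (h - 1)) k (k * h))
    (W : Grass k (k * h)) (hW : IsCompl W.sp (sumV V)) :
    pr (extendC hh hk V W hW) = V := by
  apply Subtype.ext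
  funext j
  rw [hpr, extendC]
  exact extFun_castLE V W j

/-- the fiber of `pr` over `V₀` is the space of complements of `sumV V₀` -/
noncomputable def fiberEquiv
    (hpr : ∀ (H : Config h (k * h) k (k * h)) (j : Fin (h - 1)),
      (pr H).1 j = H.1 (Fin.castLE (Nat.sub_le h 1) j))
    (hh : 1 ≤ h) (hk : 0 < k) (V₀ : Config (h - 1) (k * (h - 1)) k (k * h)) :
    {H : Config h (k * h) k (k * h) // pr H = V₀} ≃ₜ
      {W : Grass k (k * h) // IsCompl W.sp (sumV V₀)} where
  toFun H := ⟨H.1.1 ⟨h - 1, by omega⟩, by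
    have := compl_last pr hpr hh H.1
    rwa [H.2] at this⟩
  invFun W := ⟨extendC hh hk V₀ W.1 W.2, pr_extendC pr hpr hh hk V₀ W.1 W.2⟩
  left_inv H := by
    apply Subtype.ext
    apply Subtype.ext
    funext j
    show extFun V₀ (H.1.1 ⟨h - 1, by omega⟩) j = H.1.1 j
    rw [extFun]
    by_cases hj : (j : ℕ) < h - 1
    · rw [dif_pos hj]
      have h1 : V₀.1 ⟨(j : ℕ), hj⟩ = (pr H.1).1 ⟨(j : ℕ), hj⟩ := by rw [H.2]
      have hcast : Fin.castLE (Nat.sub_le h 1) ⟨(j : ℕ), hj⟩ = j := Fin.ext rfl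
      rw [h1, hpr, hcast]
    · rw [dif_neg hj]
      have hje : j = ⟨h - 1, by omega⟩ := by
        have := j.isLt
        apply Fin.ext
        show (j : ℕ) = h - 1
        omega
      rw [hje]
  right_inv W := by
    apply Subtype.ext
    show extFun V₀ W.1 ⟨h - 1, by omega⟩ = W.1
    exact extFun_last hh V₀ W.1
  continuous_toFun := by
    apply Continuous.subtype_mk
    exact (continuous_apply _).comp (continuous_subtype_val.comp continuous_subtype_val)
  continuous_invFun := by
    apply Continuous.subtype_mk
    apply Continuous.subtype_mk
    apply continuous_pi
    intro j
    show Continuous fun W : {W : Grass k (k * h) // IsCompl W.sp (sumV V₀)} =>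
      extFun V₀ W.1 j
    by_cases hj : (j : ℕ) < h - 1
    · simp only [extFun, dif_pos hj]
      exact continuous_const
    · simp only [extFun, dif_neg hj]
      exact continuous_subtype_val


lemma sum_mulVec {ι : Type*} {p q : ℕ} (s : Finset ι) (A : ι → Matrix (Fin p) (Fin q) ℂ)
    (v : Fin q → ℂ) : (∑ j ∈ s, A j) *ᵥ v = ∑ j ∈ s, A j *ᵥ v := by
  funext i
  simp only [Matrix.mulVec, dotProduct, Finset.sum_apply, Matrix.sum_apply,
    Finset.sum_mul]
  rw [Finset.sum_comm]

lemma dotProduct_sum' {ι : Type*} {p : ℕ} (s : Finset ι) (u : Fin p → ℂ)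
    (f : ι → Fin p → ℂ) : u ⬝ᵥ (∑ j ∈ s, f j) = ∑ j ∈ s, u ⬝ᵥ f j := by
  simp only [dotProduct, Finset.sum_apply, Finset.mul_sum]
  rw [Finset.sum_comm]

/-- data for a chart around a configuration -/
structure ChartData (h k : ℕ) (V₀ : Config (h - 1) (k * (h - 1)) k (k * h)) where
  E : Matrix (Fin (k * h)) (Fin (k * (h - 1))) ℂ
  B : Matrix (Fin (k * h)) (Fin k) ℂ
  hEinj : ∀ x, E *ᵥ x = 0 → x = 0
  hErange : LinearMap.range E.mulVecLin = sumV V₀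
  hBinj : ∀ v, B *ᵥ v = 0 → v = 0
  hEB : Eᴴ * B = 0

open ComplexOrder in
lemma exists_chartData (hh : 1 ≤ h) (V₀ : Config (h - 1) (k * (h - 1)) k (k * h)) :
    Nonempty (ChartData h k V₀) := by
  obtain ⟨E, hEinj, hErange⟩ :=
    exists_basis_matrix (k * h) (k * (h - 1)) (sumV V₀) (sumV_finrank V₀)
  have hrankE : E.rank = k * (h - 1) := by rw [Matrix.rank, hErange, sumV_finrank]
  have hkerdim : finrank ℂ (LinearMap.ker (Eᴴ).mulVecLin) = k := by
    have h1 := LinearMap.finrank_range_add_finrank_ker (Eᴴ).mulVecLin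
    have h2 : finrank ℂ (LinearMap.range (Eᴴ).mulVecLin) = k * (h - 1) := by
      have h3 : (Eᴴ).rank = k * (h - 1) := by rw [Matrix.rank_conjTranspose, hrankE]
      exact h3
    rw [h2, Module.finrank_fin_fun] at h1
    have h4 := nat_split (h := h) (k := k) hh
    omega
  obtain ⟨B, hBinj, hBrange⟩ := exists_basis_matrix (k * h) k _ hkerdim
  refine ⟨⟨E, B, hEinj, hErange, hBinj, ?_⟩⟩
  apply mat_ext
  intro v
  rw [Matrix.zero_mulVec, ← Matrix.mulVec_mulVec]
  have hmem : B *ᵥ v ∈ LinearMap.ker (Eᴴ).mulVecLin := hBrange ▸ ⟨v, rfl⟩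
  exact LinearMap.mem_ker.mp hmem

variable {V₀ : Config (h - 1) (k * (h - 1)) k (k * h)}

/-- the sum of the projectors of a configuration -/
noncomputable def Sig (V : Config (h - 1) (k * (h - 1)) k (k * h)) :
    Matrix (Fin (k * h)) (Fin (k * h)) ℂ :=
  ∑ j, (V.1 j).1

lemma continuous_Sig : Continuous (Sig (h := h) (k := k)) :=
  continuous_finset_sum _ fun j _ =>
    continuous_subtype_val.comp ((continuous_apply j).comp continuous_subtype_val)

lemma Sig_mulVec_mem (V : Config (h - 1) (k * (h - 1)) k (k * h)) (v : Fin (k * h) → ℂ) :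
    Sig V *ᵥ v ∈ sumV V := by
  rw [Sig, sum_mulVec]
  exact Submodule.sum_mem _ fun j _ => le_iSup (fun j' => (V.1 j').sp) j ⟨v, rfl⟩

/-- the neighborhood of `V₀` over which the fibration trivializes -/
def USet (d : ChartData h k V₀) : Set (Config (h - 1) (k * (h - 1)) k (k * h)) :=
  {V | (d.Eᴴ * Sig V * d.E).det ≠ 0}

lemma isOpen_USet (d : ChartData h k V₀) : IsOpen (USet d) := by
  have hc : Continuous fun V : Config (h - 1) (k * (h - 1)) k (k * h) =>
      (d.Eᴴ * Sig V * d.E).det :=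
    ((continuous_const.matrix_mul continuous_Sig).matrix_mul continuous_const).matrix_det
  exact IsOpen.preimage hc isOpen_ne

lemma dot_star_proj {p : ℕ} (P : Matrix (Fin p) (Fin p) ℂ) (hPP : Pᴴ * P = P)
    (u : Fin p → ℂ) : star u ⬝ᵥ (P *ᵥ u) = star (P *ᵥ u) ⬝ᵥ (P *ᵥ u) := by
  conv_lhs => rw [← hPP]
  rw [← Matrix.mulVec_mulVec, Matrix.dotProduct_mulVec, ← Matrix.star_mulVec]

open ComplexOrder in
lemma sumV_ann_eq_zero (V₀ : Config (h - 1) (k * (h - 1)) k (k * h)) (u : Fin (k * h) → ℂ)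
    (hPu : ∀ j, (V₀.1 j).1 *ᵥ u = 0) (hmem : u ∈ sumV V₀) : u = 0 := by
  have hdots : ∀ z, z ∈ sumV V₀ → star u ⬝ᵥ z = 0 := by
    intro z hz
    refine Submodule.iSup_induction (motive := fun z' => star u ⬝ᵥ z' = 0)
      (fun j => (V₀.1 j).sp) hz ?_ (by simp) ?_
    · rintro j z' ⟨t, rfl⟩
      show star u ⬝ᵥ ((V₀.1 j).1 *ᵥ t) = 0
      rw [Matrix.dotProduct_mulVec]
      have h5 : star u ᵥ* (V₀.1 j).1 = star ((V₀.1 j).1 *ᵥ u) := by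
        rw [Matrix.star_mulVec, (V₀.1 j).2.2.1]
      rw [h5, hPu j]
      simp
    · intro a b ha hb
      rw [dotProduct_add, ha, hb, add_zero]
  exact dotProduct_star_self_eq_zero.mp (hdots u hmem)

open ComplexOrder in
lemma V₀_mem_USet (d : ChartData h k V₀) : V₀ ∈ USet d := by
  show (d.Eᴴ * Sig V₀ * d.E).det ≠ 0
  intro hdet
  obtain ⟨y, hy, hy0⟩ := Matrix.exists_mulVec_eq_zero_iff.2 hdet
  have hPP : ∀ j : Fin (h - 1), (V₀.1 j).1ᴴ * (V₀.1 j).1 = (V₀.1 j).1 := fun j => by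
    rw [(V₀.1 j).2.2.1, (V₀.1 j).2.1]
  have hPu : ∀ j, (V₀.1 j).1 *ᵥ (d.E *ᵥ y) = 0 := by
    have hsum : ∑ j, star (d.E *ᵥ y) ⬝ᵥ ((V₀.1 j).1 *ᵥ (d.E *ᵥ y)) = 0 := by
      have h1 : (d.Eᴴ * Sig V₀ * d.E) *ᵥ y = d.Eᴴ *ᵥ (Sig V₀ *ᵥ (d.E *ᵥ y)) := by
        rw [Matrix.mulVec_mulVec, Matrix.mulVec_mulVec]
      have h2 : star y ⬝ᵥ ((d.Eᴴ * Sig V₀ * d.E) *ᵥ y)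
          = star (d.E *ᵥ y) ⬝ᵥ (Sig V₀ *ᵥ (d.E *ᵥ y)) := by
        rw [h1, Matrix.dotProduct_mulVec, ← Matrix.star_mulVec]
      have h3 : star (d.E *ᵥ y) ⬝ᵥ (Sig V₀ *ᵥ (d.E *ᵥ y))
          = ∑ j, star (d.E *ᵥ y) ⬝ᵥ ((V₀.1 j).1 *ᵥ (d.E *ᵥ y)) := by
        rw [Sig, sum_mulVec, dotProduct_sum']
      rw [← h3, ← h2, hy0, dotProduct_zero]
    have hnn : ∀ j ∈ Finset.univ,
        (0:ℂ) ≤ star (d.E *ᵥ y) ⬝ᵥ ((V₀.1 j).1 *ᵥ (d.E *ᵥ y)) := by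
      intro j _
      rw [dot_star_proj _ (hPP j)]
      exact dotProduct_star_self_nonneg _
    intro j
    have hz := (Finset.sum_eq_zero_iff_of_nonneg hnn).mp hsum j (Finset.mem_univ j)
    rw [dot_star_proj _ (hPP j)] at hz
    exact dotProduct_star_self_eq_zero.mp hz
  have hu0 : d.E *ᵥ y = 0 :=
    sumV_ann_eq_zero V₀ _ hPu (d.hErange ▸ ⟨y, rfl⟩)
  exact hy (d.hEinj y hu0)

/-- the moving family of column matrices for the sum subspace -/
noncomputable def EV (d : ChartData h k V₀) (V : Config (h - 1) (k * (h - 1)) k (k * h)) :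
    Matrix (Fin (k * h)) (Fin (k * (h - 1))) ℂ :=
  Sig V * d.E

lemma hTransV (d : ChartData h k V₀) {V : Config (h - 1) (k * (h - 1)) k (k * h)}
    (hV : V ∈ USet d) : TransHyp d.B (EV d V) := by
  intro v x hvx
  have h1 : d.Eᴴ *ᵥ (d.B *ᵥ v + EV d V *ᵥ x) = 0 := by rw [hvx, Matrix.mulVec_zero]
  rw [Matrix.mulVec_add, Matrix.mulVec_mulVec, d.hEB, Matrix.zero_mulVec, zero_add,
    EV, Matrix.mulVec_mulVec, ← Matrix.mul_assoc] at h1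
  have hx : x = 0 := by
    by_contra hx0
    exact hV (Matrix.exists_mulVec_eq_zero_iff.1 ⟨x, hx0, h1⟩)
  refine ⟨?_, hx⟩
  apply d.hBinj
  rw [hx, Matrix.mulVec_zero, add_zero] at hvx
  exact hvx

lemma hErangeV (d : ChartData h k V₀) {V : Config (h - 1) (k * (h - 1)) k (k * h)}
    (hV : V ∈ USet d) : LinearMap.range (EV d V).mulVecLin = sumV V := by
  apply Submodule.eq_of_le_of_finrank_eq
  · rintro y ⟨x, rfl⟩
    show (EV d V) *ᵥ x ∈ sumV V
    rw [EV, ← Matrix.mulVec_mulVec]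
    exact Sig_mulVec_mem V _
  · have hle : (EV d V).rank ≤ k * (h - 1) := Matrix.rank_le_width _
    have hge : k * (h - 1) ≤ (EV d V).rank := by
      have h1 : (d.Eᴴ * EV d V).rank = k * (h - 1) := by
        have h2 : d.Eᴴ * EV d V = d.Eᴴ * Sig V * d.E := by rw [EV, Matrix.mul_assoc]
        rw [h2, Matrix.rank_of_isUnit _ ((Matrix.isUnit_iff_isUnit_det _).mpr
          (isUnit_iff_ne_zero.mpr hV)), Fintype.card_fin]
      calc k * (h - 1) = (d.Eᴴ * EV d V).rank := h1.symm
        _ ≤ (EV d V).rank := Matrix.rank_mul_le_right _ _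
    have : (EV d V).rank = k * (h - 1) := le_antisymm hle hge
    rw [← Matrix.rank, this, sumV_finrank]

lemma hkm_eq (hh : 1 ≤ h) : k + k * (h - 1) = k * h := by
  have := nat_split (h := h) (k := k) hh
  omega

/-- the Grassmannian point associated to a chart matrix -/
noncomputable def gphi (d : ChartData h k V₀) (V : Config (h - 1) (k * (h - 1)) k (k * h))
    (hV : V ∈ USet d) (X : Matrix (Fin (k * (h - 1))) (Fin k) ℂ) : Grass k (k * h) :=
  ⟨phi d.B (EV d V) X, phi_idem (hTransV d hV) X, phi_herm (hTransV d hV) X,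
    phi_rank (hTransV d hV) X⟩

lemma gphi_isCompl (hh : 1 ≤ h) (d : ChartData h k V₀)
    {V : Config (h - 1) (k * (h - 1)) k (k * h)} (hV : V ∈ USet d)
    (X : Matrix (Fin (k * (h - 1))) (Fin k) ℂ) :
    IsCompl (gphi d V hV X).sp (sumV V) :=
  phi_isCompl (hTransV d hV) X (hErangeV d hV) (sumV_finrank V) (hkm_eq hh)


/-- the chart on the space of complements of `sumV V₀` -/
noncomputable def chartEquiv (hh : 1 ≤ h) (d : ChartData h k V₀) (hV₀ : V₀ ∈ USet d) :
    {W : Grass k (k * h) // IsCompl W.sp (sumV V₀)} ≃ₜ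
      Matrix (Fin (k * (h - 1))) (Fin k) ℂ where
  toFun W := psi d.B (EV d V₀) W.1.1
  invFun X := ⟨gphi d V₀ hV₀ X, gphi_isCompl hh d hV₀ X⟩
  left_inv W := by
    apply Subtype.ext
    apply Subtype.ext
    show phi d.B (EV d V₀) (psi d.B (EV d V₀) W.1.1) = W.1.1
    exact phi_psi (hTransV d hV₀) (hErangeV d hV₀) W.1.2.1 W.1.2.2.1 W.1.2.2.2 W.2
  right_inv X := psi_phi (hTransV d hV₀) X
  continuous_toFun :=
    continuous_psi continuous_const continuous_const
      (continuous_subtype_val.comp continuous_subtype_val)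
      (fun W => gram_det_ne_zero
        (F_inj_of_compl (hTransV d hV₀) (hErangeV d hV₀) W.2 W.1.2.1))
  continuous_invFun := by
    apply Continuous.subtype_mk
    apply continuous_induced_rng.mpr
    show Continuous fun X => phi d.B (EV d V₀) X
    exact continuous_phi continuous_const continuous_const continuous_id
      (fun _ => hTransV d hV₀)

/-- index equivalence for flattening matrices -/
def finSplit (hsz : k * (k * h - k) = (k * (h - 1)) * k) :
    Fin (k * (k * h - k)) ≃ Fin (k * (h - 1)) × Fin k :=
  (finCongr hsz).trans finProdFinEquiv.symm

/-- matrices are homeomorphic to tuples -/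
noncomputable def matHomeo (hsz : k * (k * h - k) = (k * (h - 1)) * k) :
    Matrix (Fin (k * (h - 1))) (Fin k) ℂ ≃ₜ (Fin (k * (k * h - k)) → ℂ) where
  toFun M i := M (finSplit hsz i).1 (finSplit hsz i).2
  invFun f := Matrix.of fun r c => f ((finSplit hsz).symm (r, c))
  left_inv M := by
    funext r c
    simp
  right_inv f := by
    funext i
    simp
  continuous_toFun := continuous_pi fun i => continuous_id.matrix_elem _ _
  continuous_invFun := continuous_matrix fun r c => continuous_apply _

lemma continuous_pr
    (hpr : ∀ (H : Config h (k * h) k (k * h)) (j : Fin (h - 1)),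
      (pr H).1 j = H.1 (Fin.castLE (Nat.sub_le h 1) j)) : Continuous pr := by
  apply continuous_induced_rng.mpr
  have he : (fun H : Config h (k * h) k (k * h) => (pr H).1)
      = fun H => fun j => H.1 (Fin.castLE (Nat.sub_le h 1) j) :=
    funext fun H => funext fun j => hpr H j
  show Continuous fun H : Config h (k * h) k (k * h) => (pr H).1
  rw [he]
  exact continuous_pi fun j => (continuous_apply _).comp continuous_subtype_val

/-- the local trivialization of `pr` over `USet d` -/
noncomputable def trivEquiv
    (hpr : ∀ (H : Config h (k * h) k (k * h)) (j : Fin (h - 1)),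
      (pr H).1 j = H.1 (Fin.castLE (Nat.sub_le h 1) j))
    (hh : 1 ≤ h) (hk : 0 < k) (d : ChartData h k V₀) :
    {x : Config h (k * h) k (k * h) // pr x ∈ USet d} ≃ₜ
      (USet d) × Matrix (Fin (k * (h - 1))) (Fin k) ℂ where
  toFun H := (⟨pr H.1, H.2⟩, psi d.B (EV d (pr H.1)) (H.1.1 ⟨h - 1, by omega⟩).1)
  invFun VX := ⟨extendC hh hk VX.1.1 (gphi d VX.1.1 VX.1.2 VX.2)
      (gphi_isCompl hh d VX.1.2 VX.2),
    by rw [pr_extendC pr hpr hh hk]; exact VX.1.2⟩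
  left_inv H := by
    apply Subtype.ext
    apply Subtype.ext
    funext j
    show extFun (pr H.1) (gphi d (pr H.1) H.2
      (psi d.B (EV d (pr H.1)) (H.1.1 ⟨h - 1, by omega⟩).1)) j = H.1.1 j
    have hgp : gphi d (pr H.1) H.2
        (psi d.B (EV d (pr H.1)) (H.1.1 ⟨h - 1, by omega⟩).1)
        = H.1.1 ⟨h - 1, by omega⟩ := by
      apply Subtype.ext
      exact phi_psi (hTransV d H.2) (hErangeV d H.2) (H.1.1 _).2.1 (H.1.1 _).2.2.1
        (H.1.1 _).2.2.2 (compl_last pr hpr hh H.1)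
    rw [hgp, extFun]
    by_cases hj : (j : ℕ) < h - 1
    · rw [dif_pos hj, hpr]
      have hcast : Fin.castLE (Nat.sub_le h 1) ⟨(j : ℕ), hj⟩ = j := Fin.ext rfl
      rw [hcast]
    · rw [dif_neg hj]
      have hje : j = ⟨h - 1, by omega⟩ := by
        have := j.isLt
        apply Fin.ext
        show (j : ℕ) = h - 1
        omega
      rw [hje]
  right_inv := by
    rintro ⟨⟨V, hV⟩, X⟩
    have hpre : pr (extendC hh hk V (gphi d V hV X) (gphi_isCompl hh d hV X)) = V :=
      pr_extendC pr hpr hh hk _ _ _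
    have hlast : (extendC hh hk V (gphi d V hV X) (gphi_isCompl hh d hV X)).1
        ⟨h - 1, by omega⟩ = gphi d V hV X := extFun_last hh _ _
    apply Prod.ext
    · exact Subtype.ext hpre
    · show psi d.B
        (EV d (pr (extendC hh hk V (gphi d V hV X) (gphi_isCompl hh d hV X))))
        ((extendC hh hk V (gphi d V hV X) (gphi_isCompl hh d hV X)).1
          ⟨h - 1, by omega⟩).1 = X
      rw [hpre, hlast]
      exact psi_phi (hTransV d hV) X
  continuous_toFun := by
    apply Continuous.prodMk
    · exact (((continuous_pr pr hpr).comp continuous_subtype_val)).subtype_mk _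
    · apply continuous_psi continuous_const
      · show Continuous fun H : {x : Config h (k * h) k (k * h) // pr x ∈ USet d} =>
          EV d (pr H.1)
        simp only [EV]
        exact (continuous_Sig.comp
          ((continuous_pr pr hpr).comp continuous_subtype_val)).matrix_mul continuous_const
      · exact continuous_subtype_val.comp ((continuous_apply _).comp
          (continuous_subtype_val.comp continuous_subtype_val))
      · intro H
        exact gram_det_ne_zero (F_inj_of_compl (hTransV d H.2) (hErangeV d H.2)
          (compl_last pr hpr hh H.1) (H.1.1 _).2.1)
  continuous_invFun := by
    apply Continuous.subtype_mk
    apply Continuous.subtype_mk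
    apply continuous_pi
    intro j
    show Continuous fun VX : (USet d) × Matrix (Fin (k * (h - 1))) (Fin k) ℂ =>
      extFun VX.1.1 (gphi d VX.1.1 VX.1.2 VX.2) j
    by_cases hj : (j : ℕ) < h - 1
    · simp only [extFun, dif_pos hj]
      exact (continuous_apply _).comp
        (continuous_subtype_val.comp (continuous_subtype_val.comp continuous_fst :
          Continuous fun VX : (USet d) × Matrix (Fin (k * (h - 1))) (Fin k) ℂ => VX.1.1))
    · simp only [extFun, dif_neg hj]
      apply continuous_induced_rng.mpr
      show Continuous fun VX : (USet d) × Matrix (Fin (k * (h - 1))) (Fin k) ℂ =>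
        phi d.B (EV d VX.1.1) VX.2
      apply continuous_phi continuous_const ?_ continuous_snd (fun VX => hTransV d VX.1.2)
      show Continuous fun VX : (USet d) × Matrix (Fin (k * (h - 1))) (Fin k) ℂ =>
        EV d VX.1.1
      simp only [EV]
      exact (continuous_Sig.comp
        (continuous_subtype_val.comp continuous_fst)).matrix_mul continuous_const

end ConfigLayer

/-- The projection onto the first `h - 1` coordinates
`pr : F_h^{kh}(k,kh) → F_{h-1}^{k(h-1)}(k,kh)` is a locally trivial fibration whose fiber
over a point `V₀ = (H₁, …, H_{h-1})` is the set of `H ∈ Gr(k,kh)` with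
`H ⊕ (H₁ + ⋯ + H_{h-1}) = ℂ^{kh}`, which is homeomorphic to `ℂ^{k(kh-k)}`. -/
theorem pr_fibration (h k : ℕ) (hh : 2 ≤ h) (hk : 0 < k)
    (pr : Config h (k * h) k (k * h) → Config (h - 1) (k * (h - 1)) k (k * h))
    (hpr : ∀ (H : Config h (k * h) k (k * h)) (j : Fin (h - 1)),
      (pr H).1 j = H.1 (Fin.castLE (Nat.sub_le h 1) j)) :
    IsLocTrivFibration (Fin (k * (k * h - k)) → ℂ) pr ∧
    ∀ V₀ : Config (h - 1) (k * (h - 1)) k (k * h),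
      Nonempty ({H : Config h (k * h) k (k * h) // pr H = V₀} ≃ₜ
        {W : Grass k (k * h) //
          IsCompl W.sp (⨆ j, ((V₀.1 j).sp) : Submodule ℂ (Fin (k * h) → ℂ))}) ∧
      Nonempty ({W : Grass k (k * h) //
          IsCompl W.sp (⨆ j, ((V₀.1 j).sp) : Submodule ℂ (Fin (k * h) → ℂ))} ≃ₜ
        (Fin (k * (k * h - k)) → ℂ)) := by
  have hh1 : 1 ≤ h := by omega
  have hsub : k * h - k = k * (h - 1) := by
    have := nat_split (h := h) (k := k) hh1
    omega
  have hsz : k * (k * h - k) = (k * (h - 1)) * k := by rw [hsub, Nat.mul_comm]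
  constructor
  · intro V₀
    obtain ⟨d⟩ := exists_chartData hh1 V₀
    refine ⟨USet d, isOpen_USet d, V₀_mem_USet d,
      ⟨(trivEquiv pr hpr hh1 hk d).trans
        ((Homeomorph.refl _).prodCongr (matHomeo hsz)), ?_⟩⟩
    intro x
    rfl
  · intro V₀
    obtain ⟨d⟩ := exists_chartData hh1 V₀
    exact ⟨⟨fiberEquiv pr hpr hh1 hk V₀⟩,
      ⟨(chartEquiv hh1 d (V₀_mem_USet d)).trans (matHomeo hsz)⟩⟩
end
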